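/- For every integer b ≥ 2, one has |[2, 2, b, 2*(b−1)]| = 3b² − 5b + 3, and, setting q = |[2, 2, b, 2*b]|, one has in the rational numbers: 1 − (|[2, 2]| + |[2*b]|)/q − (1 + |[2, 2, b, 2*(b−1)]|)/q = 2(b−5)/q; in particular this quantity (which equals E·f*(K_{S(b)}) for the relevant (−1)-curve E in Theorem 1.5) is negative for b < 5, zero for b = 5, and positive for b > 5. -/

import Mathlib

/-- Hirzebruch–Jung numerator: |[]| = 1, |[n]| = n,
|[n₁, n₂, …]| = n₁·|[n₂, …]| − |[n₃, …]|. -/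
def hj : List ℤ → ℤ
  | [] => 1
  | [n] => n
  | n :: m :: l => n * hj (m :: l) - hj l

lemma hj_rep (n : ℕ) : hj (List.replicate n 2) = n + 1 := by
  induction n using Nat.twoStepInduction with
  | zero => simp [hj]
  | one => simp [hj]
  | more n ih1 ih2 =>
    show hj (2 :: 2 :: List.replicate n 2) = _
    rw [hj, show (2 : ℤ) :: List.replicate n 2 = List.replicate (n+1) 2 from rfl,
      ih1, ih2]
    push_cast; ring

lemma hj_cons_rep (b : ℤ) (n : ℕ) :
    hj (b :: List.replicate n 2) = b * (n + 1) - n := by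
  cases n with
  | zero => simp [hj]
  | succ n =>
    show hj (b :: 2 :: List.replicate n 2) = _
    rw [hj, show (2 : ℤ) :: List.replicate n 2 = List.replicate (n+1) 2 from rfl,
      hj_rep, hj_rep]
    push_cast; ring

lemma hj_main (b : ℤ) (n : ℕ) :
    hj (2 :: 2 :: b :: List.replicate n 2) = 3 * b * (n + 1) - 5 * n - 2 := by
  rw [hj, hj, hj_cons_rep, hj_rep]
  ring

theorem Ef_K_Sb_three_sing (b : ℤ) (hb : 2 ≤ b)
    (q : ℤ) (hq : q = hj ([2, 2, b] ++ List.replicate b.toNat 2)) :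
    hj ([2, 2, b] ++ List.replicate (b - 1).toNat 2) = 3 * b ^ 2 - 5 * b + 3 ∧
    (1 : ℚ) -
        ((hj [2, 2] : ℚ) + (hj (List.replicate b.toNat 2) : ℚ)) / (q : ℚ) -
        (1 + (hj ([2, 2, b] ++ List.replicate (b - 1).toNat 2) : ℚ)) / (q : ℚ) =
      (2 * ((b : ℚ) - 5)) / (q : ℚ) ∧
    (b < 5 → (2 * ((b : ℚ) - 5)) / (q : ℚ) < 0) ∧
    (b = 5 → (2 * ((b : ℚ) - 5)) / (q : ℚ) = 0) ∧
    (5 < b → 0 < (2 * ((b : ℚ) - 5)) / (q : ℚ)) := by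
  have hbn : ((b.toNat : ℤ)) = b := Int.toNat_of_nonneg (by omega)
  have hbn1 : (((b - 1).toNat : ℤ)) = b - 1 := Int.toNat_of_nonneg (by omega)
  have h1 : hj ([2, 2, b] ++ List.replicate (b - 1).toNat 2) = 3 * b ^ 2 - 5 * b + 3 := by
    show hj (2 :: 2 :: b :: List.replicate (b - 1).toNat 2) = _
    rw [hj_main, hbn1]; ring
  have hqv : q = 3 * b ^ 2 - 2 * b - 2 := by
    rw [hq]
    rw [show ([2, 2, b] ++ List.replicate b.toNat 2 : List ℤ)
        = 2 :: 2 :: b :: List.replicate b.toNat 2 from rfl, hj_main, hbn]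
    ring
  have hqpos : (0 : ℤ) < q := by rw [hqv]; nlinarith
  have hqQ : (0 : ℚ) < (q : ℚ) := by exact_mod_cast hqpos
  refine ⟨h1, ?_, ?_, ?_, ?_⟩
  · rw [h1, show hj [2, 2] = 3 from rfl, hj_rep]
    have : ((q : ℚ)) = 3 * (b : ℚ) ^ 2 - 2 * (b : ℚ) - 2 := by exact_mod_cast hqv
    field_simp
    rw [this]; rw [hbn]; push_cast; ring
  · intro h
    apply div_neg_of_neg_of_pos _ hqQ
    have : (b : ℚ) < 5 := by exact_mod_cast h
    linarith
  · intro h; subst h; norm_num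
  · intro h
    apply div_pos _ hqQ
    have : (5 : ℚ) < b := by exact_mod_cast h
    linarith
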